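/- Let A, B, C, D be diagonal complex n×n matrices and 1 ≤ p ≤ 2. Then the Schatten p-norm of the 2n×2n block matrix [[A,B],[C,D]] is at least the Schatten p-norm of [[|A|,|B|],[|C|,|D|]], where |X| = (X*X)^{1/2}. For p ≥ 2 the inequality is reversed. -/

import Mathlib

open scoped Matrix

/-- The Schatten `p`-norm `(Tr (M* M)^{p/2})^{1/p}` of a complex matrix. -/
noncomputable def schattenNorm {n : Type*} [Fintype n] [DecidableEq n]
    (p : ℝ) (M : Matrix n n ℂ) : ℝ :=
  (∑ i, (Matrix.isHermitian_conjTranspose_mul_self M).eigenvalues i ^ (p / 2)) ^ (1 / p)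

open Polynomial Matrix Finset Complex

lemma charpoly_conj {m : Type*} [Fintype m] [DecidableEq m]
    (U A : Matrix m m ℂ) (hU : U * star U = 1) :
    (U * A * star U).charpoly = A.charpoly := by
  have hmap : ∀ (P Q : Matrix m m ℂ), (P * Q).map (C : ℂ →+* ℂ[X]) = P.map C * Q.map C :=
    fun P Q => Matrix.map_mul
  have hone : U.map (C : ℂ →+* ℂ[X]) * (star U).map (C : ℂ →+* ℂ[X]) = 1 := by
    rw [← hmap, hU, Matrix.map_one _ (map_zero C) (map_one C)]
  have hcomm : ∀ M : Matrix m m ℂ[X], M * Matrix.scalar m (X : ℂ[X]) = Matrix.scalar m X * M :=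
    fun M => (Matrix.scalar_commute X (fun r => Commute.all X r) M).symm.eq
  have key : charmatrix (U * A * star U)
      = U.map (C : ℂ →+* ℂ[X]) * charmatrix A * (star U).map (C : ℂ →+* ℂ[X]) := by
    unfold charmatrix
    rw [mul_sub, sub_mul]
    congr 1
    · rw [show U.map (C : ℂ →+* ℂ[X]) * Matrix.scalar m X * (star U).map C
          = Matrix.scalar m X * (U.map (C : ℂ →+* ℂ[X]) * (star U).map C) by
        rw [← hcomm, mul_assoc, mul_assoc, hcomm]]
      rw [hone, mul_one]
    · rw [RingHom.mapMatrix_apply, RingHom.mapMatrix_apply, hmap, hmap]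
  have hdet : (U.map (C : ℂ →+* ℂ[X])).det * ((star U).map (C : ℂ →+* ℂ[X])).det = 1 := by
    rw [← Matrix.det_mul, hone, Matrix.det_one]
  rw [Matrix.charpoly, key, Matrix.det_mul, Matrix.det_mul, Matrix.charpoly]
  calc (U.map (C : ℂ →+* ℂ[X])).det * (charmatrix A).det * ((star U).map (C : ℂ →+* ℂ[X])).det
      = (charmatrix A).det *
        ((U.map (C : ℂ →+* ℂ[X])).det * ((star U).map (C : ℂ →+* ℂ[X])).det) := by ring
    _ = (charmatrix A).det := by rw [hdet, mul_one]

lemma charpoly_diag {m : Type*} [Fintype m] [DecidableEq m] (d : m → ℂ) :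
    (Matrix.diagonal d).charpoly = ∏ i, (X - C (d i)) := by
  rw [Matrix.charpoly, ← Matrix.det_diagonal]
  congr 1
  ext i j
  by_cases h : i = j
  · subst h; simp
  · simp [h, Matrix.charmatrix_apply_ne _ _ _ h, Matrix.diagonal_apply_ne _ h]

lemma charpoly_eq_prod {m : Type*} [Fintype m] [DecidableEq m] {A : Matrix m m ℂ}
    (hA : A.IsHermitian) : A.charpoly = ∏ i, (X - C (hA.eigenvalues i : ℂ)) := by
  conv_lhs => rw [hA.spectral_theorem, Unitary.conjStarAlgAut_apply]
  rw [charpoly_conj _ _ ((Matrix.mem_unitaryGroup_iff).mp (hA.eigenvectorUnitary).2),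
    charpoly_diag]
  rfl

lemma roots_charpoly {m : Type*} [Fintype m] [DecidableEq m] {A : Matrix m m ℂ}
    (hA : A.IsHermitian) :
    A.charpoly.roots = Finset.univ.val.map (fun i => (hA.eigenvalues i : ℂ)) := by
  rw [charpoly_eq_prod hA]
  rw [show (∏ i, (X - C ((hA.eigenvalues i : ℂ))))
      = ((Finset.univ.val.map fun i => (hA.eigenvalues i : ℂ)).map fun a => X - C a).prod by
    rw [Multiset.map_map]; rfl]
  exact roots_multiset_prod_X_sub_C _

def pairEquiv (n : ℕ) : Fin 2 × Fin n ≃ (Fin n ⊕ Fin n) where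
  toFun p := if p.1 = 0 then Sum.inl p.2 else Sum.inr p.2
  invFun x := Sum.elim (fun i => (0, i)) (fun i => (1, i)) x
  left_inv := by rintro ⟨k, i⟩; fin_cases k <;> simp
  right_inv := by rintro (i | i) <;> simp

lemma det_fromBlocks_diag {R : Type*} [CommRing R] {n : ℕ} (E F F' G : Fin n → R) :
    (Matrix.fromBlocks (diagonal E) (diagonal F) (diagonal F') (diagonal G)).det
      = ∏ i, (E i * G i - F i * F' i) := by
  rw [← Matrix.det_submatrix_equiv_self (pairEquiv n)]
  have : (Matrix.fromBlocks (diagonal E) (diagonal F) (diagonal F') (diagonal G)).submatrix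
      (pairEquiv n) (pairEquiv n)
      = Matrix.blockDiagonal (fun i => !![E i, F i; F' i, G i]) := by
    ext ⟨k, i⟩ ⟨l, j⟩
    fin_cases k <;> fin_cases l <;> by_cases h : i = j <;>
      simp [pairEquiv, Matrix.blockDiagonal_apply, Matrix.diagonal_apply, h]
  rw [this, Matrix.det_blockDiagonal]
  congr 1; ext i
  rw [Matrix.det_fin_two_of]

lemma charmatrix_diag {R : Type*} [CommRing R] {m : Type*} [Fintype m] [DecidableEq m]
    (d : m → R) : charmatrix (diagonal d) = diagonal (fun i => (X : R[X]) - C (d i)) := by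
  ext i j
  by_cases h : i = j
  · subst h; simp
  · simp [h, Matrix.charmatrix_apply_ne _ _ _ h, Matrix.diagonal_apply_ne _ h]

lemma charpoly_fromBlocks_diag {n : ℕ} (e f f' g : Fin n → ℂ) :
    (Matrix.fromBlocks (diagonal e) (diagonal f) (diagonal f') (diagonal g)).charpoly
      = ∏ i, ((X - C (e i)) * (X - C (g i)) - C (f i) * C (f' i)) := by
  rw [Matrix.charpoly, charmatrix_fromBlocks, charmatrix_diag, charmatrix_diag,
    Matrix.diagonal_map (map_zero C), Matrix.diagonal_map (map_zero C),
    Matrix.diagonal_neg, Matrix.diagonal_neg, det_fromBlocks_diag]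
  congr 1; ext i; ring

variable {n : ℕ}

noncomputable def eE (a c : Fin n → ℂ) (i : Fin n) : ℝ := ‖a i‖ ^ 2 + ‖c i‖ ^ 2
noncomputable def fF (a b c d : Fin n → ℂ) (i : Fin n) : ℝ :=
  ‖starRingEnd ℂ (a i) * b i + starRingEnd ℂ (c i) * d i‖
noncomputable def tT (a b c d : Fin n → ℂ) (i : Fin n) : ℝ := (eE a c i + eE b d i) / 2
noncomputable def rR (a b c d : Fin n → ℂ) (i : Fin n) : ℝ :=
  Real.sqrt (((eE a c i - eE b d i) / 2) ^ 2 + fF a b c d i ^ 2)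

lemma HH (a b c d : Fin n → ℂ) :
    (Matrix.fromBlocks (diagonal a) (diagonal b) (diagonal c) (diagonal d))ᴴ *
      (Matrix.fromBlocks (diagonal a) (diagonal b) (diagonal c) (diagonal d))
    = Matrix.fromBlocks
        (diagonal fun i => starRingEnd ℂ (a i) * a i + starRingEnd ℂ (c i) * c i)
        (diagonal fun i => starRingEnd ℂ (a i) * b i + starRingEnd ℂ (c i) * d i)
        (diagonal fun i => starRingEnd ℂ (b i) * a i + starRingEnd ℂ (d i) * c i)
        (diagonal fun i => starRingEnd ℂ (b i) * b i + starRingEnd ℂ (d i) * d i) := by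
  rw [Matrix.fromBlocks_conjTranspose, Matrix.fromBlocks_multiply]
  simp [Matrix.diagonal_conjTranspose, Matrix.diagonal_mul_diagonal, Matrix.diagonal_add,
    mul_comm]

-- import earlier pieces
lemma charpoly_fromBlocks_diag' {n : ℕ} (e f f' g : Fin n → ℂ) : True := trivial

lemma rR_nonneg (a b c d : Fin n → ℂ) (i : Fin n) : 0 ≤ rR a b c d i := Real.sqrt_nonneg _

lemma rR_le_tT (a b c d : Fin n → ℂ) (i : Fin n)
    (hf : fF a b c d i ^ 2 ≤ eE a c i * eE b d i) : rR a b c d i ≤ tT a b c d i := by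
  have ht : 0 ≤ tT a b c d i := by
    have h1 : 0 ≤ eE a c i := by unfold eE; positivity
    have h2 : 0 ≤ eE b d i := by unfold eE; positivity
    unfold tT; linarith
  rw [rR, show tT a b c d i = Real.sqrt (tT a b c d i ^ 2) by rw [Real.sqrt_sq ht]]
  apply Real.sqrt_le_sqrt
  unfold tT at *; nlinarith [hf]

lemma fF_sq_le (a b c d : Fin n → ℂ) (i : Fin n) :
    fF a b c d i ^ 2 ≤ eE a c i * eE b d i := by
  have h1 : fF a b c d i ≤ ‖a i‖ * ‖b i‖
      + ‖c i‖ * ‖d i‖ := by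
    unfold fF
    refine (norm_add_le _ _).trans ?_
    simp [norm_mul, Complex.norm_conj]
  have h0 : 0 ≤ fF a b c d i := norm_nonneg _
  unfold eE
  nlinarith [sq_nonneg (‖a i‖ * ‖d i‖ - ‖b i‖ * ‖c i‖),
    norm_nonneg (a i), norm_nonneg (b i), norm_nonneg (c i), norm_nonneg (d i)]


lemma quad_eq (a b c d : Fin n → ℂ) (i : Fin n) :
    ((X : ℂ[X]) - C (starRingEnd ℂ (a i) * a i + starRingEnd ℂ (c i) * c i))
        * (X - C (starRingEnd ℂ (b i) * b i + starRingEnd ℂ (d i) * d i))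
      - C (starRingEnd ℂ (a i) * b i + starRingEnd ℂ (c i) * d i)
        * C (starRingEnd ℂ (b i) * a i + starRingEnd ℂ (d i) * c i)
    = (X - C ((tT a b c d i + rR a b c d i : ℝ) : ℂ))
        * (X - C ((tT a b c d i - rR a b c d i : ℝ) : ℂ)) := by
  have key : ∀ z : ℂ, starRingEnd ℂ z * z = ((‖z‖ ^ 2 : ℝ) : ℂ) := fun z => by
    rw [mul_comm, Complex.mul_conj, Complex.normSq_eq_norm_sq]
  set e := starRingEnd ℂ (a i) * a i + starRingEnd ℂ (c i) * c i with he
  set g := starRingEnd ℂ (b i) * b i + starRingEnd ℂ (d i) * d i with hg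
  set f := starRingEnd ℂ (a i) * b i + starRingEnd ℂ (c i) * d i with hf
  set f' := starRingEnd ℂ (b i) * a i + starRingEnd ℂ (d i) * c i with hf'
  have hee : e = ((eE a c i : ℝ) : ℂ) := by
    rw [he, eE, key, key]; norm_cast
  have hgg : g = ((eE b d i : ℝ) : ℂ) := by
    rw [hg, eE, key, key]; norm_cast
  have hff : f * f' = ((fF a b c d i ^ 2 : ℝ) : ℂ) := by
    have hcf : f' = starRingEnd ℂ f := by
      rw [hf, hf']; simp only [map_add, _root_.map_mul, Complex.conj_conj]; ring
    rw [hcf, Complex.mul_conj, Complex.normSq_eq_norm_sq, fF]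
  have hr2 : rR a b c d i ^ 2 = ((eE a c i - eE b d i) / 2) ^ 2 + fF a b c d i ^ 2 := by
    rw [rR, Real.sq_sqrt (by positivity)]
  have hsum : ((tT a b c d i + rR a b c d i : ℝ) : ℂ) + ((tT a b c d i - rR a b c d i : ℝ) : ℂ)
      = e + g := by
    rw [hee, hgg, tT]; push_cast; ring
  have hreal : (tT a b c d i + rR a b c d i) * (tT a b c d i - rR a b c d i)
      = eE a c i * eE b d i - fF a b c d i ^ 2 := by
    have h := hr2; unfold tT; nlinarith [h]
  have hprod : ((tT a b c d i + rR a b c d i : ℝ) : ℂ) * ((tT a b c d i - rR a b c d i : ℝ) : ℂ)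
      = e * g - f * f' := by
    rw [hee, hgg, hff]
    have := congrArg (Complex.ofReal) hreal
    push_cast at this ⊢
    linear_combination this
  have h1 : C e + C g = C ((tT a b c d i + rR a b c d i : ℝ) : ℂ)
      + C ((tT a b c d i - rR a b c d i : ℝ) : ℂ) := by
    rw [← map_add, ← map_add, hsum]
  have h2 : C e * C g - C f * C f' = C ((tT a b c d i + rR a b c d i : ℝ) : ℂ)
      * C ((tT a b c d i - rR a b c d i : ℝ) : ℂ) := by
    rw [← _root_.map_mul, ← _root_.map_mul, ← _root_.map_mul, ← map_sub, hprod]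
  linear_combination (-(X : ℂ[X])) * h1 + h2

lemma eig_multiset (a b c d : Fin n → ℂ) :
    (Finset.univ.val.map fun j => (((Matrix.isHermitian_conjTranspose_mul_self
        (Matrix.fromBlocks (diagonal a) (diagonal b) (diagonal c)
          (diagonal d))).eigenvalues j : ℝ) : ℂ))
      = Finset.univ.val.bind (fun i =>
          {((tT a b c d i + rR a b c d i : ℝ) : ℂ), ((tT a b c d i - rR a b c d i : ℝ) : ℂ)}) := by
  set M := Matrix.fromBlocks (diagonal a) (diagonal b) (diagonal c) (diagonal d) with hM
  set S : Multiset ℂ := Finset.univ.val.bind (fun i =>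
      {((tT a b c d i + rR a b c d i : ℝ) : ℂ), ((tT a b c d i - rR a b c d i : ℝ) : ℂ)}) with hS
  have hcp : (Mᴴ * M).charpoly = (S.map fun z => X - C z).prod := by
    rw [show Mᴴ * M = _ from HH a b c d, charpoly_fromBlocks_diag,
      Finset.prod_congr rfl (fun i _ => quad_eq a b c d i), hS, Multiset.map_bind,
      Multiset.prod_bind, ← Finset.prod_eq_multiset_prod]
    refine Finset.prod_congr rfl (fun i _ => ?_)
    simp
  have := roots_charpoly (Matrix.isHermitian_conjTranspose_mul_self M)
  rw [hcp, roots_multiset_prod_X_sub_C] at this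
  exact this.symm

lemma sum_eig_rpow (q : ℝ) (a b c d : Fin n → ℂ) :
    ∑ j, ((Matrix.isHermitian_conjTranspose_mul_self
        (Matrix.fromBlocks (diagonal a) (diagonal b) (diagonal c)
          (diagonal d))).eigenvalues j) ^ q
      = ∑ i, ((tT a b c d i + rR a b c d i) ^ q + (tT a b c d i - rR a b c d i) ^ q) := by
  have h := congrArg (fun s : Multiset ℂ => ((s.map fun z : ℂ => z.re ^ q)).sum)
    (eig_multiset a b c d)
  simp only [Multiset.map_bind, Multiset.sum_bind, Multiset.map_map] at h
  rw [Finset.sum_eq_multiset_sum, Finset.sum_eq_multiset_sum]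
  convert h using 2 <;> simp

-- two point lemmas
lemma two_point_concave {φ : ℝ → ℝ} (hφ : ConcaveOn ℝ (Set.Ici 0) φ)
    {t r₁ r₂ : ℝ} (h0 : 0 ≤ r₁) (h12 : r₁ ≤ r₂) (h2t : r₂ ≤ t) :
    φ (t - r₂) + φ (t + r₂) ≤ φ (t - r₁) + φ (t + r₁) := by
  rcases eq_or_lt_of_le (h0.trans h12) with h | h
  · obtain rfl : r₂ = 0 := h.symm
    obtain rfl : r₁ = 0 := le_antisymm h12 h0
    exact le_refl _
  · set μ := (r₂ + r₁) / (2 * r₂) with hμdef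
    have hr2 : (0:ℝ) < r₂ := h
    have hμ0 : 0 ≤ μ := by positivity
    have hμ1 : 0 ≤ 1 - μ := by
      rw [hμdef]; rw [sub_nonneg, div_le_one (by linarith)]; linarith
    have hx : (t - r₂) ∈ Set.Ici (0:ℝ) := by simp; linarith
    have hy : (t + r₂) ∈ Set.Ici (0:ℝ) := by simp; linarith
    have hA := hφ.2 hy hx hμ0 hμ1 (by ring)
    have hB := hφ.2 hx hy hμ0 hμ1 (by ring)
    have e1 : μ • (t + r₂) + (1 - μ) • (t - r₂) = t + r₁ := by
      simp only [smul_eq_mul, hμdef]; field_simp; ring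
    have e2 : μ • (t - r₂) + (1 - μ) • (t + r₂) = t - r₁ := by
      simp only [smul_eq_mul, hμdef]; field_simp; ring
    rw [e1] at hA; rw [e2] at hB
    simp only [smul_eq_mul] at hA hB
    linarith

lemma two_point_convex {φ : ℝ → ℝ} (hφ : ConvexOn ℝ (Set.Ici 0) φ)
    {t r₁ r₂ : ℝ} (h0 : 0 ≤ r₁) (h12 : r₁ ≤ r₂) (h2t : r₂ ≤ t) :
    φ (t - r₁) + φ (t + r₁) ≤ φ (t - r₂) + φ (t + r₂) := by
  have := two_point_concave (φ := fun x => -φ x) hφ.neg h0 h12 h2t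
  simp at this; linarith

section absq
variable (a b c d : Fin n → ℂ)

lemma eE_abs : eE (fun i => ((‖a i‖ : ℝ) : ℂ)) (fun i => ((‖c i‖ : ℝ) : ℂ))
    = eE a c := by
  funext i; unfold eE; simp

lemma tT_abs : tT (fun i => ((‖a i‖ : ℝ) : ℂ)) (fun i => ((‖b i‖ : ℝ) : ℂ))
    (fun i => ((‖c i‖ : ℝ) : ℂ)) (fun i => ((‖d i‖ : ℝ) : ℂ)) = tT a b c d := by
  funext i; unfold tT; rw [eE_abs, eE_abs]

lemma fF_abs (i : Fin n) : fF (fun i => ((‖a i‖ : ℝ) : ℂ))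
    (fun i => ((‖b i‖ : ℝ) : ℂ)) (fun i => ((‖c i‖ : ℝ) : ℂ))
    (fun i => ((‖d i‖ : ℝ) : ℂ)) i
    = ‖a i‖ * ‖b i‖ + ‖c i‖ * ‖d i‖ := by
  unfold fF
  rw [Complex.conj_ofReal, Complex.conj_ofReal, ← Complex.ofReal_mul, ← Complex.ofReal_mul,
    ← Complex.ofReal_add, Complex.norm_real]
  exact Real.norm_of_nonneg (by positivity)

lemma fF_le (i : Fin n) : fF a b c d i ≤ fF (fun i => ((‖a i‖ : ℝ) : ℂ))
    (fun i => ((‖b i‖ : ℝ) : ℂ)) (fun i => ((‖c i‖ : ℝ) : ℂ))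
    (fun i => ((‖d i‖ : ℝ) : ℂ)) i := by
  rw [fF_abs]
  unfold fF
  refine (norm_add_le _ _).trans ?_
  simp [norm_mul, Complex.norm_conj]

lemma rR_le (i : Fin n) : rR a b c d i ≤ rR (fun i => ((‖a i‖ : ℝ) : ℂ))
    (fun i => ((‖b i‖ : ℝ) : ℂ)) (fun i => ((‖c i‖ : ℝ) : ℂ))
    (fun i => ((‖d i‖ : ℝ) : ℂ)) i := by
  unfold rR
  rw [eE_abs, eE_abs]
  apply Real.sqrt_le_sqrt
  have h := fF_le a b c d i
  have h0 : 0 ≤ fF a b c d i := norm_nonneg _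
  nlinarith [h, h0]

lemma rR_abs_le_tT (i : Fin n) : rR (fun i => ((‖a i‖ : ℝ) : ℂ))
    (fun i => ((‖b i‖ : ℝ) : ℂ)) (fun i => ((‖c i‖ : ℝ) : ℂ))
    (fun i => ((‖d i‖ : ℝ) : ℂ)) i ≤ tT a b c d i := by
  rw [← tT_abs]
  exact rR_le_tT _ _ _ _ i (fF_sq_le _ _ _ _ i)

end absq

theorem block_diagonal_abs_ineq {n : ℕ} (p : ℝ) (a b c d : Fin n → ℂ) :
    (1 ≤ p → p ≤ 2 →
      schattenNorm p
          (Matrix.fromBlocks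
            (Matrix.diagonal fun i => ((‖a i‖ : ℝ) : ℂ))
            (Matrix.diagonal fun i => ((‖b i‖ : ℝ) : ℂ))
            (Matrix.diagonal fun i => ((‖c i‖ : ℝ) : ℂ))
            (Matrix.diagonal fun i => ((‖d i‖ : ℝ) : ℂ))) ≤
        schattenNorm p
          (Matrix.fromBlocks (Matrix.diagonal a) (Matrix.diagonal b)
            (Matrix.diagonal c) (Matrix.diagonal d))) ∧
    (2 ≤ p →
      schattenNorm p
          (Matrix.fromBlocks (Matrix.diagonal a) (Matrix.diagonal b)
            (Matrix.diagonal c) (Matrix.diagonal d)) ≤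
        schattenNorm p
          (Matrix.fromBlocks
            (Matrix.diagonal fun i => ((‖a i‖ : ℝ) : ℂ))
            (Matrix.diagonal fun i => ((‖b i‖ : ℝ) : ℂ))
            (Matrix.diagonal fun i => ((‖c i‖ : ℝ) : ℂ))
            (Matrix.diagonal fun i => ((‖d i‖ : ℝ) : ℂ)))) := by
  set a' : Fin n → ℂ := fun i => ((‖a i‖ : ℝ) : ℂ)
  set b' : Fin n → ℂ := fun i => ((‖b i‖ : ℝ) : ℂ)
  set c' : Fin n → ℂ := fun i => ((‖c i‖ : ℝ) : ℂ)
  set d' : Fin n → ℂ := fun i => ((‖d i‖ : ℝ) : ℂ)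
  constructor
  · intro hp1 hp2
    have hp0 : 0 < p := by linarith
    simp only [schattenNorm]
    rw [sum_eig_rpow, sum_eig_rpow, tT_abs]
    apply Real.rpow_le_rpow
    · apply Finset.sum_nonneg
      intro i _
      have h1 := rR_abs_le_tT a b c d i
      have h2 := rR_nonneg a' b' c' d' i
      exact add_nonneg (Real.rpow_nonneg (by linarith) _) (Real.rpow_nonneg (by linarith) _)
    · apply Finset.sum_le_sum
      intro i _
      have key := two_point_concave (Real.concaveOn_rpow (p := p / 2) (by positivity) (by linarith))
        (rR_nonneg a b c d i) (rR_le a b c d i) (rR_abs_le_tT a b c d i)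
      linarith [key]
    · positivity
  · intro hp2
    have hp0 : 0 < p := by linarith
    simp only [schattenNorm]
    rw [sum_eig_rpow, sum_eig_rpow, tT_abs]
    apply Real.rpow_le_rpow
    · apply Finset.sum_nonneg
      intro i _
      have h1 := rR_le_tT a b c d i (fF_sq_le a b c d i)
      have h2 := rR_nonneg a b c d i
      exact add_nonneg (Real.rpow_nonneg (by linarith) _) (Real.rpow_nonneg (by linarith) _)
    · apply Finset.sum_le_sum
      intro i _
      have key := two_point_convex (convexOn_rpow (p := p / 2) (by linarith : 1 ≤ p / 2))
        (rR_nonneg a b c d i) (rR_le a b c d i) (rR_abs_le_tT a b c d i)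
      linarith [key]
    · positivity
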